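/- Let κ be an infinite cardinal with cf(κ) = ω, let Y be an infinite Hausdorff topological space, and let Z be a topological space with o(Z) ≥ κ. Then κ is not a weak precaliber* for the product space Y × Z. -/

import Mathlib

open Cardinal Set

universe u

/-- `κ` is a caliber for `X`: every κ-indexed family of non-empty open sets
(repetitions allowed) has a κ-sized subfamily with non-empty intersection. -/
def IsCaliber (X : Type u) [TopologicalSpace X] (κ : Cardinal.{u}) : Prop :=
  ∀ {ι : Type u} (U : ι → Set X), #ι = κ → (∀ i, IsOpen (U i)) → (∀ i, (U i).Nonempty) →
    ∃ J : Set ι, #J = κ ∧ (⋂ i ∈ J, U i).Nonempty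

/-- `κ` is a precaliber for `X`: every κ-indexed family of non-empty open sets
has a κ-sized subfamily which is centered. -/
def IsPrecaliber (X : Type u) [TopologicalSpace X] (κ : Cardinal.{u}) : Prop :=
  ∀ {ι : Type u} (U : ι → Set X), #ι = κ → (∀ i, IsOpen (U i)) → (∀ i, (U i).Nonempty) →
    ∃ J : Set ι, #J = κ ∧
      ∀ s : Finset ι, ↑s ⊆ J → s.Nonempty → (⋂ i ∈ s, U i).Nonempty

/-- `κ` is a weak precaliber for `X`: every κ-indexed family of non-empty open sets
has a κ-sized subfamily which is linked. -/
def IsWeakPrecaliber (X : Type u) [TopologicalSpace X] (κ : Cardinal.{u}) : Prop :=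
  ∀ {ι : Type u} (U : ι → Set X), #ι = κ → (∀ i, IsOpen (U i)) → (∀ i, (U i).Nonempty) →
    ∃ J : Set ι, #J = κ ∧ ∀ i ∈ J, ∀ j ∈ J, (U i ∩ U j).Nonempty

/-- `κ` is a caliber* for `X`: every family of non-empty open sets of cardinality `κ`
has a subfamily of cardinality `κ` with non-empty intersection. -/
def IsCaliberStar (X : Type u) [TopologicalSpace X] (κ : Cardinal.{u}) : Prop :=
  ∀ 𝒰 : Set (Set X), #𝒰 = κ → (∀ U ∈ 𝒰, IsOpen U) → (∀ U ∈ 𝒰, U.Nonempty) →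
    ∃ 𝒱 ⊆ 𝒰, #𝒱 = κ ∧ (⋂₀ 𝒱).Nonempty

/-- `κ` is a precaliber* for `X`: every family of non-empty open sets of cardinality `κ`
has a centered subfamily of cardinality `κ`. -/
def IsPrecaliberStar (X : Type u) [TopologicalSpace X] (κ : Cardinal.{u}) : Prop :=
  ∀ 𝒰 : Set (Set X), #𝒰 = κ → (∀ U ∈ 𝒰, IsOpen U) → (∀ U ∈ 𝒰, U.Nonempty) →
    ∃ 𝒱 ⊆ 𝒰, #𝒱 = κ ∧
      ∀ s : Finset (Set X), ↑s ⊆ 𝒱 → s.Nonempty → (⋂₀ (↑s : Set (Set X))).Nonempty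

/-- `κ` is a weak precaliber* for `X`: every family of non-empty open sets of
cardinality `κ` has a linked subfamily of cardinality `κ`. -/
def IsWeakPrecaliberStar (X : Type u) [TopologicalSpace X] (κ : Cardinal.{u}) : Prop :=
  ∀ 𝒰 : Set (Set X), #𝒰 = κ → (∀ U ∈ 𝒰, IsOpen U) → (∀ U ∈ 𝒰, U.Nonempty) →
    ∃ 𝒱 ⊆ 𝒰, #𝒱 = κ ∧ ∀ U ∈ 𝒱, ∀ V ∈ 𝒱, (U ∩ V).Nonempty

/-- `o X` : the number of open subsets of `X`. -/
def oCard (X : Type u) [TopologicalSpace X] : Cardinal.{u} :=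
  #{U : Set X | IsOpen U}

/-- A cellular family: a pairwise disjoint collection of non-empty open sets. -/
def IsCellularFamily (X : Type u) [TopologicalSpace X] (𝒰 : Set (Set X)) : Prop :=
  (∀ U ∈ 𝒰, IsOpen U) ∧ (∀ U ∈ 𝒰, U.Nonempty) ∧ 𝒰.Pairwise Disjoint

lemma cellStep {Y : Type u} [TopologicalSpace Y] [T2Space Y]
    {O : Set Y} (hO : IsOpen O) (hinf : O.Infinite) :
    ∃ U O' : Set Y, IsOpen U ∧ U.Nonempty ∧ IsOpen O' ∧ O'.Infinite ∧
      Disjoint U O' ∧ U ⊆ O ∧ O' ⊆ O := by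
  obtain ⟨x, hx, y, hy, hxy⟩ := hinf.nontrivial
  obtain ⟨A, B, hA, hB, hxA, hyB, hAB⟩ := t2_separation hxy
  by_cases hA' : (A ∩ O).Infinite
  · exact ⟨B ∩ O, A ∩ O, hB.inter hO, ⟨y, hyB, hy⟩, hA.inter hO, hA',
      hAB.symm.mono inter_subset_left inter_subset_left, inter_subset_right, inter_subset_right⟩
  · push_neg at hA'
    have hsing : IsOpen ({x} : Set Y) := by
      have hcl : IsClosed ((A ∩ O) \ {x}) := ((hA'.subset diff_subset).isClosed)
      have : ({x} : Set Y) = (A ∩ O) ∩ ((A ∩ O) \ {x})ᶜ := by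
        ext z
        simp only [mem_singleton_iff, mem_inter_iff, mem_compl_iff, mem_diff,
          mem_singleton_iff, not_and, not_not]
        constructor
        · rintro rfl; exact ⟨⟨hxA, hx⟩, fun _ => rfl⟩
        · rintro ⟨hz, h2⟩; exact h2 hz
      rw [this]
      exact (hA.inter hO).inter hcl.isOpen_compl
    refine ⟨{x}, O \ {x}, hsing, singleton_nonempty x,
      hO.sdiff isClosed_singleton, hinf.diff (finite_singleton x),
      disjoint_sdiff_right, singleton_subset_iff.2 hx, diff_subset⟩

lemma exists_cellular_seq (Y : Type u) [TopologicalSpace Y] [T2Space Y] [Infinite Y] :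
    ∃ V : ℕ → Set Y, (∀ n, IsOpen (V n)) ∧ (∀ n, (V n).Nonempty) ∧
      (∀ m n, m ≠ n → Disjoint (V m) (V n)) := by
  classical
  let T := {O : Set Y // IsOpen O ∧ O.Infinite}
  have step : ∀ t : T, ∃ p : Set Y × T, IsOpen p.1 ∧ p.1.Nonempty ∧
      Disjoint p.1 p.2.1 ∧ p.1 ⊆ t.1 ∧ p.2.1 ⊆ t.1 := by
    intro t
    obtain ⟨U, O', h1, h2, h3, h4, h5, h6, h7⟩ := cellStep t.2.1 t.2.2
    exact ⟨(U, ⟨O', h3, h4⟩), h1, h2, h5, h6, h7⟩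
  choose f hf1 hf2 hf3 hf4 hf5 using step
  let O : ℕ → T := fun n => ((fun t => (f t).2)^[n]) ⟨univ, isOpen_univ, infinite_univ⟩
  have hOsucc : ∀ n, O (n + 1) = (f (O n)).2 := by
    intro n
    simp only [O, Function.iterate_succ', Function.comp_apply]
  have hmono : ∀ m n, m ≤ n → (O n).1 ⊆ (O m).1 := by
    intro m n hmn
    induction n with
    | zero => simp_all
    | succ k ih =>
      rcases Nat.lt_or_ge m (k+1) with h | h
      · have := ih (Nat.lt_succ_iff.mp h)
        rw [hOsucc k]
        exact (hf5 (O k)).trans this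
      · have : m = k + 1 := le_antisymm hmn h
        subst this; rfl
  refine ⟨fun n => (f (O n)).1, fun n => hf1 _, fun n => hf2 _, ?_⟩
  have key : ∀ m n, m < n → Disjoint (f (O m)).1 (f (O n)).1 := by
    intro m n hmn
    have h1 : (f (O n)).1 ⊆ (O n).1 := hf4 (O n)
    have h2 : (O n).1 ⊆ (O (m+1)).1 := hmono (m+1) n hmn
    have h3 : (O (m+1)).1 = (f (O m)).2.1 := by rw [hOsucc m]
    exact (hf3 (O m)).mono_right (h1.trans (h2.trans_eq h3))
  intro m n hmn
  rcases lt_or_gt_of_ne hmn with h | h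
  · exact key m n h
  · exact (key n m h).symm
theorem stmt19' (κ : Cardinal.{u}) (hκ : ℵ₀ ≤ κ) (hcof : κ.ord.cof = ℵ₀)
    (Y : Type u) [TopologicalSpace Y] [T2Space Y] [Infinite Y]
    (Z : Type u) [TopologicalSpace Z] (hZ : κ ≤ #{U : Set Z | IsOpen U}) :
    ¬ (∀ 𝒰 : Set (Set (Y × Z)), #𝒰 = κ → (∀ U ∈ 𝒰, IsOpen U) → (∀ U ∈ 𝒰, U.Nonempty) →
      ∃ 𝒱 ⊆ 𝒰, #𝒱 = κ ∧ ∀ U ∈ 𝒱, ∀ V ∈ 𝒱, (U ∩ V).Nonempty) := by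
  classical
  intro hWP
  have h1κ : (1 : Cardinal) < κ := lt_of_lt_of_le one_lt_aleph0 hκ
  -- κ-many nonempty open subsets of Z
  set NE : Set (Set Z) := {U | IsOpen U ∧ U.Nonempty} with hNEdef
  have hNEκ : κ ≤ #NE := by
    by_contra h
    push_neg at h
    have hsub : {U : Set Z | IsOpen U} ⊆ insert ∅ NE := by
      intro U hU
      rcases eq_empty_or_nonempty U with rfl | hne
      · exact mem_insert _ _
      · exact mem_insert_of_mem _ ⟨hU, hne⟩
    have h1 : #{U : Set Z | IsOpen U} ≤ #NE + 1 :=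
      (mk_le_mk_of_subset hsub).trans mk_insert_le
    exact absurd hZ (lt_of_le_of_lt h1 (Cardinal.add_lt_of_lt hκ h h1κ)).not_ge
  obtain ⟨W, hWsub, hWcard⟩ := Cardinal.le_mk_iff_exists_subset.mp hNEκ
  have hWeq : #W = #(κ.ord.ToType) := by rw [hWcard, mk_ord_toType]
  obtain ⟨e⟩ := Cardinal.eq.mp hWeq
  -- unbounded countable subset of κ.ord.ToType
  have hwf : WellFoundedLT κ.ord.ToType := inferInstance
  have hwo : IsWellOrder κ.ord.ToType (· < ·) := @isWellOrder_lt _ _ hwf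
  obtain ⟨S, hSunb, hScard⟩ := Order.exists_cof_eq κ.ord.ToType
  rw [Ordinal.cof_toType, hcof] at hScard
  have : Countable S := Cardinal.mk_le_aleph0_iff.mp hScard.le
  have : Infinite S := Cardinal.infinite_iff.mpr hScard.ge
  obtain ⟨d⟩ := nonempty_denumerable ↥S
  let g : ℕ → κ.ord.ToType := fun n => ((Denumerable.eqv ↥S).symm n : κ.ord.ToType)
  have hex : ∀ w : W, ∃ n : ℕ, e w ≤ g n := by
    intro w
    obtain ⟨b, hbS, hb⟩ := hSunb (e w)
    refine ⟨Denumerable.eqv ↥S ⟨b, hbS⟩, ?_⟩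
    have : g (Denumerable.eqv ↥S ⟨b, hbS⟩) = b := by simp [g]
    rw [this]
    exact hb
  choose c hc using hex
  -- fibers are small
  have fiberlt : ∀ n : ℕ, #{w : W | (e w : κ.ord.ToType) ≤ g n} < κ := by
    intro n
    have hinj2 : Function.Injective
        (fun w : {w : W | (e w : κ.ord.ToType) ≤ g n} => (⟨e w.1, w.2⟩ : Iic (g n))) := by
      intro a b hab
      simp only [Subtype.mk.injEq] at hab
      exact Subtype.ext (e.injective (congrArg Subtype.val hab))
    have h2 : #{w : W | (e w : κ.ord.ToType) ≤ g n} ≤ #(Iic (g n)) :=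
      Cardinal.mk_le_of_injective hinj2
    have h3 : #(Iic (g n)) ≤ #(Iio (g n)) + 1 := by
      rw [← Set.Iio_insert]; exact mk_insert_le
    exact h2.trans_lt (h3.trans_lt (Cardinal.add_lt_of_lt hκ (mk_Iio_ord_toType (g n)) h1κ))
  -- cellular family in Y
  obtain ⟨V, hVopen, hVne, hVdisj⟩ := exists_cellular_seq Y
  -- the family
  let φ : W → Set (Y × Z) := fun w => V (c w) ×ˢ (w : Set Z)
  have hφne : ∀ w : W, (φ w).Nonempty := fun w => (hVne _).prod (hWsub w.2).2
  have hφinj : Function.Injective φ := by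
    intro w w' h
    have := (Set.prod_eq_prod_iff_of_nonempty (hφne w)).mp h
    exact Subtype.ext this.2
  obtain ⟨𝒱, h𝒱sub, h𝒱card, hlinked⟩ := hWP (range φ)
    (by rw [Cardinal.mk_range_eq φ hφinj, hWcard])
    (by rintro U ⟨w, rfl⟩; exact (hVopen _).prod (hWsub w.2).1)
    (by rintro U ⟨w, rfl⟩; exact hφne w)
  -- the preimage of 𝒱
  set S' : Set W := {w : W | φ w ∈ 𝒱} with hS'def
  have hκS' : κ ≤ #S' := by
    have hsub : 𝒱 ⊆ φ '' S' := by
      intro U hU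
      obtain ⟨w, rfl⟩ := h𝒱sub hU
      exact ⟨w, hU, rfl⟩
    calc κ = #𝒱 := h𝒱card.symm
      _ ≤ #(φ '' S') := mk_le_mk_of_subset hsub
      _ ≤ #S' := mk_image_le
  have hS'ne : S'.Nonempty := by
    rw [← Set.nonempty_coe_sort, ← Cardinal.mk_ne_zero_iff]
    exact fun h => by simp [h] at hκS'; exact (aleph0_pos.trans_le hκ).ne' hκS'
  obtain ⟨w0, hw0⟩ := hS'ne
  have hconst : ∀ w ∈ S', c w = c w0 := by
    intro w hw
    by_contra hne
    obtain ⟨p, hp1, hp2⟩ := hlinked (φ w) hw (φ w0) hw0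
    exact Set.disjoint_left.mp (hVdisj (c w) (c w0) hne) hp1.1 hp2.1
  have hS'sub : S' ⊆ {w : W | (e w : κ.ord.ToType) ≤ g (c w0)} := by
    intro w hw
    have := hc w
    rwa [hconst w hw] at this
  exact absurd (hκS'.trans (mk_le_mk_of_subset hS'sub)) (fiberlt (c w0)).not_ge


theorem stmt19 (κ : Cardinal.{u}) (hκ : ℵ₀ ≤ κ) (hcof : κ.ord.cof = ℵ₀)
    (Y : Type u) [TopologicalSpace Y] [T2Space Y] [Infinite Y]
    (Z : Type u) [TopologicalSpace Z] (hZ : κ ≤ oCard Z) :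
    ¬ IsWeakPrecaliberStar (Y × Z) κ := by
  exact stmt19' κ hκ hcof Y Z hZ
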